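/- arXiv:1409.1458 — 5 statements merged into one kernel-verified Lean document; each statement's English description precedes it below -/
import Mathlib

section
/- Assume each ℓ_i is convex and (1/γ)-smooth for some γ > 0, and ‖x_i‖ ≤ 1 for all i. Fix a block k and any α ∈ ℝ^n, and set w̄ := Σ_{k'≠k} A_{[k']}α_{[k']}. Let β^(H) be the (random) result of running LocalSDCA for H iterations on block k with this w̄, starting from α_[k]. Then E[ε_{D,k}(α⟨k←β^(H)⟩)] ≤ (1 − (λnγ/(1+λnγ))·(1/ñ))^H · ε_{D,k}(α), where ñ := max_{1≤k≤K} n_k. In other words, LocalSDCA satisfies the local geometric improvement assumption with Θ = (1 − (λnγ/(1+λnγ))·(1/ñ))^H. -/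
open Finset MeasureTheory

noncomputable section

/-- Squared Euclidean norm of a finite real vector. -/
def sqnorm {m : ℕ} (v : Fin m → ℝ) : ℝ := ∑ j, v j ^ 2

/-- Euclidean norm of a finite real vector. -/
def euclNorm {m : ℕ} (v : Fin m → ℝ) : ℝ := Real.sqrt (sqnorm v)

/-- Euclidean inner product. -/
def dotp {m : ℕ} (u v : Fin m → ℝ) : ℝ := ∑ j, u j * v j

/-- `g` is the (real-valued) Fenchel conjugate of `f`:
`g u` is the least upper bound of `z ↦ u*z - f z`. -/
def IsFenchelConj (f g : ℝ → ℝ) : Prop :=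
  ∀ u : ℝ, IsLUB (Set.range fun z : ℝ => u * z - f z) (g u)

/-- `f` is smooth with constant `c`: differentiable with `c`-Lipschitz derivative. -/
def SmoothWith (c : ℝ) (f : ℝ → ℝ) : Prop :=
  Differentiable ℝ f ∧ ∀ z z' : ℝ, |deriv f z - deriv f z'| ≤ c * |z - z'|

/-- `g : ℝ → ℝ` is `γ`-strongly convex. -/
def StrongConvexWith (γ : ℝ) (g : ℝ → ℝ) : Prop :=
  ConvexOn ℝ Set.univ fun u => g u - γ / 2 * u ^ 2

variable {n d K : ℕ}

/-- `A α` where the `i`-th column of `A` is `x i / (λ n)`. -/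
def matA (lam : ℝ) (x : Fin n → Fin d → ℝ) (α : Fin n → ℝ) : Fin d → ℝ :=
  ∑ i, (α i / (lam * n)) • x i

/-- The block-`k` subvector `α_[k]` of `α`. -/
def blkOf (part : Fin n → Fin K) (k : Fin K) (α : Fin n → ℝ) :
    {i : Fin n // part i = k} → ℝ :=
  fun i => α i.1

/-- `A_[k] β`: the block-`k` submatrix of `A` applied to a block-`k` vector. -/
def blkA (lam : ℝ) (x : Fin n → Fin d → ℝ) (part : Fin n → Fin K) (k : Fin K)
    (β : {i : Fin n // part i = k} → ℝ) : Fin d → ℝ :=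
  ∑ i : {i : Fin n // part i = k}, (β i / (lam * n)) • x i.1

/-- `α⟨k←β⟩`: replace the block-`k` coordinates of `α` by `β`. -/
def updBlk (part : Fin n → Fin K) (k : Fin K) (α : Fin n → ℝ)
    (β : {i : Fin n // part i = k} → ℝ) : Fin n → ℝ :=
  fun i => if h : part i = k then β ⟨i, h⟩ else α i

/-- `ι_k β`: zero-padding of a block-`k` vector to a full vector. -/
def padBlk (part : Fin n → Fin K) (k : Fin K)
    (β : {i : Fin n // part i = k} → ℝ) : Fin n → ℝ :=
  fun i => if h : part i = k then β ⟨i, h⟩ else 0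

/-- The primal objective `P(w)`. -/
def primalObj (lam : ℝ) (x : Fin n → Fin d → ℝ) (l : Fin n → ℝ → ℝ)
    (w : Fin d → ℝ) : ℝ :=
  lam / 2 * sqnorm w + (1 / (n : ℝ)) * ∑ i, l i (dotp w (x i))

/-- The dual objective `D(α)`. -/
def dualObj (lam : ℝ) (x : Fin n → Fin d → ℝ) (lstar : Fin n → ℝ → ℝ)
    (α : Fin n → ℝ) : ℝ :=
  -(lam / 2) * sqnorm (matA lam x α) - (1 / (n : ℝ)) * ∑ i, lstar i (-(α i))

/-- The local suboptimality `ε_{D,k}(α)` on block `k`. -/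
def epsD (lam : ℝ) (x : Fin n → Fin d → ℝ) (lstar : Fin n → ℝ → ℝ)
    (part : Fin n → Fin K) (k : Fin K) (α : Fin n → ℝ) : ℝ :=
  ⨆ β : {i : Fin n // part i = k} → ℝ,
    dualObj lam x lstar (updBlk part k α β) - dualObj lam x lstar α

/-- `σ_min`: the supremum over nonzero `α` of
`λ²n²·(Σ_k ‖A_[k]α_[k]‖² − ‖Aα‖²)/‖α‖²`. -/
def sigmaMin (lam : ℝ) (x : Fin n → Fin d → ℝ) (part : Fin n → Fin K) : ℝ :=
  sSup { r : ℝ | ∃ α : Fin n → ℝ, α ≠ 0 ∧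
    r = lam ^ 2 * (n : ℝ) ^ 2 *
      ((∑ k, sqnorm (blkA lam x part k (blkOf part k α))) - sqnorm (matA lam x α)) /
        sqnorm α }

/-- The local dual objective `D_k(β; w̄)` on block `k`. -/
def locDual (lam : ℝ) (x : Fin n → Fin d → ℝ) (lstar : Fin n → ℝ → ℝ)
    (part : Fin n → Fin K) (k : Fin K) (wbar : Fin d → ℝ)
    (β : {i : Fin n // part i = k} → ℝ) : ℝ :=
  -(lam / 2) * sqnorm (wbar + blkA lam x part k β)
    - (1 / (n : ℝ)) * ∑ i : {i : Fin n // part i = k}, lstar i.1 (-(β i))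
    + lam / 2 * sqnorm wbar

/-- The local primal objective `P_k(v; w̄)` on block `k`. -/
def locPrimal (lam : ℝ) (x : Fin n → Fin d → ℝ) (l : Fin n → ℝ → ℝ)
    (part : Fin n → Fin K) (k : Fin K) (wbar v : Fin d → ℝ) : ℝ :=
  (1 / (n : ℝ)) * ∑ i : {i : Fin n // part i = k}, l i.1 (dotp (wbar + v) (x i.1))
    + lam / 2 * sqnorm v

/-- Run `H` iterations of the coordinate-wise step `st`, where `ω` lists
the (randomly chosen) coordinates used in the successive iterations. -/
def iterRun {γ : Type*} {ι : Type*} (st : ι → γ → γ) :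
    (H : ℕ) → (Fin H → ι) → γ → γ
  | 0, _, b => b
  | H + 1, ω, b => iterRun st H (fun h => ω h.succ) (st (ω 0) b)

lemma fy {f g : ℝ → ℝ} (h : IsFenchelConj f g) (u z : ℝ) : u * z - f z ≤ g u :=
  (h u).1 ⟨z, rfl⟩

lemma grad_ineq {f : ℝ → ℝ} (hc : ConvexOn ℝ Set.univ f) (hd : Differentiable ℝ f)
    (x y : ℝ) : f x + deriv f x * (y - x) ≤ f y := by
  rcases lt_trichotomy x y with h | h | h
  · have h1 := hc.deriv_le_slope (Set.mem_univ x) (Set.mem_univ y) h (hd x)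
    rw [slope_def_field] at h1
    have h2 := (le_div_iff₀ (by linarith)).mp h1
    linarith
  · subst h; simp
  · have h1 := hc.slope_le_deriv (Set.mem_univ y) (Set.mem_univ x) h (hd x)
    rw [slope_def_field] at h1
    have h2 := (div_le_iff₀ (by linarith)).mp h1
    nlinarith

lemma smooth_deriv_lemma {f : ℝ → ℝ} {c : ℝ} (hs : SmoothWith c f) (z : ℝ) :
    deriv (fun w => c / 2 * w ^ 2 - f w) z = c * z - deriv f z := by
  have h1 : DifferentiableAt ℝ (fun w : ℝ => c / 2 * w ^ 2) z := by fun_prop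
  rw [deriv_fun_sub h1 (hs.1 z)]
  congr 1
  rw [deriv_const_mul _ (by fun_prop)]
  simp [mul_comm]
  ring

lemma smooth_neg_convex {f : ℝ → ℝ} {c : ℝ} (hs : SmoothWith c f) :
    ConvexOn ℝ Set.univ (fun w => c / 2 * w ^ 2 - f w) := by
  apply Monotone.convexOn_univ_of_deriv
  · exact (differentiable_const _ |>.mul (differentiable_pow 2)).sub hs.1
  · intro a b hab
    rw [smooth_deriv_lemma hs, smooth_deriv_lemma hs]
    have := hs.2 a b
    rw [abs_sub_comm, abs_le] at this
    have h2 : |a - b| = b - a := by rw [abs_sub_comm, abs_of_nonneg (by linarith)]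
    rw [h2] at this
    nlinarith [this.1, this.2]

lemma smooth_upper {f : ℝ → ℝ} {c : ℝ} (hs : SmoothWith c f) (x y : ℝ) :
    f y ≤ f x + deriv f x * (y - x) + c / 2 * (y - x) ^ 2 := by
  have h := grad_ineq (smooth_neg_convex hs)
    ((differentiable_const _ |>.mul (differentiable_pow 2)).sub hs.1) x y
  rw [smooth_deriv_lemma hs] at h
  nlinarith [h]

lemma conj_at_grad {f g : ℝ → ℝ} (h : IsFenchelConj f g) (hc : ConvexOn ℝ Set.univ f)
    (hd : Differentiable ℝ f) (z : ℝ) : g (deriv f z) = deriv f z * z - f z := by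
  refine le_antisymm ((h _).2 ?_) (fy h _ z)
  rintro _ ⟨z', rfl⟩
  have h2 := grad_ineq hc hd z z'
  have h3 : deriv f z * (z' - z) = deriv f z * z' - deriv f z * z := by ring
  show deriv f z * z' - f z' ≤ deriv f z * z - f z
  linarith

lemma conj_anchor {f g : ℝ → ℝ} {γ : ℝ} (hγ : 0 < γ) (h : IsFenchelConj f g)
    (hs_conv : ConvexOn ℝ Set.univ f) (hs : SmoothWith (1 / γ) f) (u z : ℝ) :
    g (deriv f z) + z * (u - deriv f z) + γ / 2 * (u - deriv f z) ^ 2 ≤ g u := by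
  set a := deriv f z with ha
  set t := u - a with ht
  have key := fy h u (z + γ * t)
  have hub := smooth_upper hs z (z + γ * t)
  have hsimp : z + γ * t - z = γ * t := by ring
  rw [hsimp] at hub
  have e1 : 1 / γ / 2 * (γ * t) ^ 2 = γ / 2 * t ^ 2 := by field_simp
  rw [e1] at hub
  rw [← ha] at hub
  have hgz : g a = a * z - f z := conj_at_grad h (hs_conv) hs.1 z
  have e2 : u * (z + γ * t) - (f z + a * (γ * t) + γ / 2 * t ^ 2)
      = a * z - f z + z * t + γ / 2 * t ^ 2 := by
    have : u = a + t := by rw [ht]; ring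
    rw [this]; ring
  rw [hgz]
  clear_value t
  clear_value a
  linarith

lemma smooth_deriv_cont {f : ℝ → ℝ} {c : ℝ} (hc : 0 ≤ c) (hs : SmoothWith c f) :
    Continuous (deriv f) := by
  have : LipschitzWith (Real.toNNReal c) (deriv f) := by
    apply LipschitzWith.of_dist_le_mul
    intro a b
    rw [Real.dist_eq, Real.dist_eq, Real.coe_toNNReal c hc]
    exact hs.2 a b
  exact this.continuous

lemma reach_above {f g : ℝ → ℝ} (h : IsFenchelConj f g) (hd : Differentiable ℝ f)
    {m b : ℝ} (hmb : m < b) : ∃ z, m < deriv f z := by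
  by_contra hcon
  push_neg at hcon
  have hub : ∀ z : ℝ, 0 < z → f z ≤ f 0 + m * z := by
    intro z hz
    obtain ⟨c, _, hc⟩ := exists_deriv_eq_slope f hz hd.continuous.continuousOn
      (fun w _ => (hd w).differentiableWithinAt)
    have h2 := hcon c
    rw [hc] at h2
    have h3 := (div_le_iff₀ (by linarith : (0:ℝ) < z - 0)).mp h2
    linarith
  set z := max 1 ((g b + f 0 + 1) / (b - m)) with hz
  have hz1 : (1:ℝ) ≤ z := le_max_left _ _
  have hz0 : 0 < z := by linarith
  have hz2 : g b + f 0 + 1 ≤ z * (b - m) := by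
    have := (div_le_iff₀ (by linarith : (0:ℝ) < b - m)).mp (le_max_right 1 ((g b + f 0 + 1) / (b - m)))
    linarith
  have h4 := fy h b z
  have h5 := hub z hz0
  nlinarith

lemma reach_below {f g : ℝ → ℝ} (h : IsFenchelConj f g) (hd : Differentiable ℝ f)
    {m b : ℝ} (hmb : b < m) : ∃ z, deriv f z < m := by
  by_contra hcon
  push_neg at hcon
  have hub : ∀ z : ℝ, z < 0 → f z ≤ f 0 + m * z := by
    intro z hz
    obtain ⟨c, _, hc⟩ := exists_deriv_eq_slope f hz hd.continuous.continuousOn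
      (fun w _ => (hd w).differentiableWithinAt)
    have h2 := hcon c
    rw [hc] at h2
    have h3 := (le_div_iff₀ (by linarith : (0:ℝ) < 0 - z)).mp h2
    linarith
  set z := min (-1 : ℝ) ((g b + f 0 + 1) / (b - m)) with hz
  have hz1 : z ≤ -1 := min_le_left _ _
  have hz0 : z < 0 := by linarith
  have hz2 : g b + f 0 + 1 ≤ z * (b - m) := by
    have h6 := min_le_right (-1 : ℝ) ((g b + f 0 + 1) / (b - m))
    have := (le_div_iff_of_neg (by linarith : b - m < 0)).mp h6
    linarith
  have h4 := fy h b z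
  have h5 := hub z hz0
  nlinarith


lemma conj_combo {f g : ℝ → ℝ} {γ : ℝ} (hγ : 0 < γ) (h : IsFenchelConj f g)
    (hc : ConvexOn ℝ Set.univ f) (hs : SmoothWith (1 / γ) f)
    {s : ℝ} (h0 : 0 ≤ s) (h1 : s ≤ 1) (z₀ b : ℝ) :
    g (s * deriv f z₀ + (1 - s) * b) ≤ s * (deriv f z₀ * z₀ - f z₀) + (1 - s) * g b
      - γ / 2 * s * (1 - s) * (deriv f z₀ - b) ^ 2 := by
  have hd : Differentiable ℝ f := hs.1
  have hga : g (deriv f z₀) = deriv f z₀ * z₀ - f z₀ := conj_at_grad h hc hd z₀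
  rw [← hga]
  set a := deriv f z₀ with ha
  -- trivial cases
  rcases eq_or_lt_of_le h0 with hs0 | hs0
  · subst hs0
    have : (0:ℝ) * a + (1 - 0) * b = b := by ring
    rw [this]; ring_nf; rfl
  rcases eq_or_lt_of_le h1 with hs1 | hs1
  · subst hs1
    have : (1:ℝ) * a + (1 - 1) * b = a := by ring
    rw [this]; ring_nf; rfl
  rcases eq_or_ne a b with hab | hab
  · rw [← hab]
    have : s * a + (1 - s) * a = a := by ring
    rw [this]; ring_nf; rfl
  -- main case: find zm with deriv f zm = s*a + (1-s)*b
  set m := s * a + (1 - s) * b with hm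
  have hcont : Continuous (deriv f) := smooth_deriv_cont (by positivity) hs
  have hzm : ∃ zm, deriv f zm = m := by
    rcases lt_or_gt_of_ne hab with hab' | hab'
    · -- a < b, so a < m < b
      have hma : a < m := by nlinarith
      have hmb : m < b := by nlinarith
      obtain ⟨z₁, hz₁⟩ := reach_above h hd hmb
      have : m ∈ Set.Icc (deriv f z₀) (deriv f z₁) := ⟨le_of_lt hma, le_of_lt hz₁⟩
      obtain ⟨zm, hzm⟩ := intermediate_value_univ z₀ z₁ hcont this
      exact ⟨zm, hzm⟩
    · -- b < a, so b < m < a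
      have hma : m < a := by nlinarith
      have hmb : b < m := by nlinarith
      obtain ⟨z₁, hz₁⟩ := reach_below h hd hmb
      have : m ∈ Set.Icc (deriv f z₁) (deriv f z₀) := ⟨le_of_lt hz₁, le_of_lt hma⟩
      obtain ⟨zm, hzm⟩ := intermediate_value_univ z₁ z₀ hcont this
      exact ⟨zm, hzm⟩
  obtain ⟨zm, hzm⟩ := hzm
  have keya := conj_anchor hγ h hc hs a zm
  have keyb := conj_anchor hγ h hc hs b zm
  rw [hzm] at keya keyb
  have k1 : s * (g m + zm * (a - m) + γ / 2 * (a - m) ^ 2) ≤ s * g a :=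
    mul_le_mul_of_nonneg_left keya h0
  have k2 : (1 - s) * (g m + zm * (b - m) + γ / 2 * (b - m) ^ 2) ≤ (1 - s) * g b :=
    mul_le_mul_of_nonneg_left keyb (by linarith)
  have idm : s * (g m + zm * (a - m) + γ / 2 * (a - m) ^ 2)
      + (1 - s) * (g m + zm * (b - m) + γ / 2 * (b - m) ^ 2)
      = g m + γ / 2 * s * (1 - s) * (a - b) ^ 2 := by
    rw [hm]; ring
  clear_value m
  clear_value a
  linarith

section VecLemmas
variable {m : ℕ}

lemma sqnorm_nonneg (v : Fin m → ℝ) : 0 ≤ sqnorm v :=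
  Finset.sum_nonneg fun j _ => sq_nonneg _

lemma dotp_self (v : Fin m → ℝ) : dotp v v = sqnorm v := by
  unfold dotp sqnorm; exact Finset.sum_congr rfl fun j _ => (sq (v j)).symm

lemma sqnorm_add (u v : Fin m → ℝ) :
    sqnorm (u + v) = sqnorm u + 2 * dotp u v + sqnorm v := by
  unfold sqnorm dotp
  rw [Finset.mul_sum, ← Finset.sum_add_distrib, ← Finset.sum_add_distrib]
  exact Finset.sum_congr rfl fun j _ => by simp [Pi.add_apply]; ring

lemma dotp_add_left (u v w : Fin m → ℝ) :
    dotp (u + v) w = dotp u w + dotp v w := by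
  unfold dotp
  rw [← Finset.sum_add_distrib]
  exact Finset.sum_congr rfl fun j _ => by simp [Pi.add_apply]; ring

lemma dotp_smul_right (c : ℝ) (u v : Fin m → ℝ) :
    dotp u (c • v) = c * dotp u v := by
  unfold dotp
  rw [Finset.mul_sum]
  exact Finset.sum_congr rfl fun j _ => by simp [Pi.smul_apply]; ring

lemma sqnorm_smul (c : ℝ) (v : Fin m → ℝ) : sqnorm (c • v) = c ^ 2 * sqnorm v := by
  unfold sqnorm
  rw [Finset.mul_sum]
  exact Finset.sum_congr rfl fun j _ => by simp [Pi.smul_apply]; ring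

lemma dotp_sum_right {ι : Type*} (s : Finset ι) (w : Fin m → ℝ) (F : ι → Fin m → ℝ) :
    dotp w (∑ i ∈ s, F i) = ∑ i ∈ s, dotp w (F i) := by
  unfold dotp
  rw [Finset.sum_comm]
  refine Finset.sum_congr rfl fun j _ => ?_
  rw [Finset.sum_apply, Finset.mul_sum]

lemma sqnorm_le_one_of_euclNorm {v : Fin m → ℝ} (h : euclNorm v ≤ 1) : sqnorm v ≤ 1 := by
  have h0 := sqnorm_nonneg v
  have := Real.sq_sqrt h0
  unfold euclNorm at h
  nlinarith [Real.sqrt_nonneg (sqnorm v)]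

end VecLemmas

lemma sqnorm_sub_nonneg {m : ℕ} (u v : Fin m → ℝ) :
    0 ≤ sqnorm u - 2 * dotp u v + sqnorm v := by
  have h := sqnorm_nonneg (u - v)
  have he : sqnorm (u - v) = sqnorm u - 2 * dotp u v + sqnorm v := by
    unfold sqnorm dotp
    have hterm : ∀ j : Fin m, (u - v) j ^ 2 = u j ^ 2 - 2 * (u j * v j) + v j ^ 2 :=
      fun j => by simp [Pi.sub_apply]; ring
    rw [Finset.sum_congr rfl fun j _ => hterm j, Finset.sum_add_distrib,
      Finset.sum_sub_distrib, Finset.mul_sum]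
  linarith

lemma ciSup_sub_const {ι : Type*} [Nonempty ι] (f : ι → ℝ) (hb : BddAbove (Set.range f))
    (c : ℝ) : (⨆ i, f i - c) = (⨆ i, f i) - c := by
  obtain ⟨M, hM⟩ := hb
  have hb' : BddAbove (Set.range fun i => f i - c) := by
    refine ⟨M - c, ?_⟩
    rintro _ ⟨i, rfl⟩
    have := hM ⟨i, rfl⟩
    simpa using sub_le_sub_right this c
  apply le_antisymm
  · exact ciSup_le fun i => sub_le_sub_right (le_ciSup ⟨M, hM⟩ i) c
  · rw [sub_le_iff_le_add]
    exact ciSup_le fun i => by linarith [le_ciSup hb' i]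

set_option maxHeartbeats 4000000

/-- LocalSDCA satisfies the local geometric improvement assumption
with `Θ = (1 − (λnγ/(1+λnγ))·(1/ñ))^H`. -/
theorem localSDCA_geometric_improvement
    (n d K : ℕ) (hn : 0 < n) (hd : 0 < d) (hK : 0 < K)
    (lam γ : ℝ) (hlam : 0 < lam) (hγ : 0 < γ)
    (x : Fin n → Fin d → ℝ) (hx : ∀ i, euclNorm (x i) ≤ 1)
    (l lstar : Fin n → ℝ → ℝ)
    (hconj : ∀ i, IsFenchelConj (l i) (lstar i))
    (hconv : ∀ i, ConvexOn ℝ Set.univ (l i))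
    (hsmooth : ∀ i, SmoothWith (1 / γ) (l i))
    (part : Fin n → Fin K) (hpart : ∀ k, ∃ i, part i = k)
    (k : Fin K) (α : Fin n → ℝ) (H : ℕ)
    (wbar : Fin d → ℝ)
    (hwbar : wbar = ∑ k' ∈ Finset.univ.erase k, blkA lam x part k' (blkOf part k' α))
    -- one LocalSDCA step on coordinate `i`: replace `β i` by the maximizing value
    (st : {i : Fin n // part i = k} → ({i : Fin n // part i = k} → ℝ) →
      ({i : Fin n // part i = k} → ℝ))
    (hst_coord : ∀ i β j, j ≠ i → st i β j = β j)
    (hst_max : ∀ i β c,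
      locDual lam x lstar part k wbar (Function.update β i c)
        ≤ locDual lam x lstar part k wbar (st i β))
    (ntilde : ℕ)
    (hnt : ntilde = Finset.univ.sup fun k' : Fin K =>
      Fintype.card {i : Fin n // part i = k'}) :
    -- E[ε_{D,k}(α⟨k←β^(H)⟩)], averaging over the uniformly chosen coordinates
    (∑ ω : Fin H → {i : Fin n // part i = k},
        epsD lam x lstar part k (updBlk part k α (iterRun st H ω (blkOf part k α))))
      / (Fintype.card {i : Fin n // part i = k} : ℝ) ^ H
    ≤ (1 - lam * n * γ / (1 + lam * n * γ) * (1 / (ntilde : ℝ))) ^ H *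
        epsD lam x lstar part k α := by
  classical
  obtain ⟨i0, hi0⟩ := hpart k
  haveI : Nonempty {i : Fin n // part i = k} := ⟨⟨i0, hi0⟩⟩
  have hnR : (0:ℝ) < (n:ℝ) := by exact_mod_cast hn
  have hnne : (n:ℝ) ≠ 0 := ne_of_gt hnR
  have hlamne : lam ≠ 0 := ne_of_gt hlam
  set nk := Fintype.card {i : Fin n // part i = k} with hnkdef
  have hnk1 : 1 ≤ nk := Fintype.card_pos
  have hnkR : (1:ℝ) ≤ (nk:ℝ) := by exact_mod_cast hnk1
  have hnknt : nk ≤ ntilde := by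
    rw [hnt]; exact Finset.le_sup (f := fun k' : Fin K => Fintype.card {i : Fin n // part i = k'}) (Finset.mem_univ k)
  have hlng : 0 < lam * n * γ := by positivity
  have hlng1 : 0 < 1 + lam * n * γ := by linarith
  set s := lam * (n:ℝ) * γ / (1 + lam * (n:ℝ) * γ) with hsdef
  have hs_pos : 0 < s := by positivity
  have hs_lt1 : s < 1 := by
    rw [hsdef, div_lt_one hlng1]; linarith
  have hkey : s / (lam * (n:ℝ)) = γ * (1 - s) := by
    rw [hsdef]; field_simp; ring
  set f := locDual lam x lstar part k wbar with hfdef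
  have hfval : ∀ βv : {i : Fin n // part i = k} → ℝ, f βv
      = -(lam / 2) * sqnorm (wbar + blkA lam x part k βv)
        - (1 / (n : ℝ)) * ∑ i : {i : Fin n // part i = k}, lstar i.1 (-(βv i))
        + lam / 2 * sqnorm wbar := fun βv => rfl
  -- dot product identity
  have hdot : ∀ (w : Fin d → ℝ) (β : {i : Fin n // part i = k} → ℝ),
      (∑ i : {i : Fin n // part i = k}, β i * dotp w (x i.1))
        = lam * (n:ℝ) * dotp w (blkA lam x part k β) := by
    intro w β
    rw [blkA, dotp_sum_right, Finset.mul_sum]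
    refine Finset.sum_congr rfl fun i _ => ?_
    rw [dotp_smul_right]
    field_simp
  -- block decomposition of matA of an update
  have hblkOfupd : ∀ β, blkOf part k (updBlk part k α β) = β := by
    intro β; funext i
    show updBlk part k α β i.1 = β i
    rw [updBlk, dif_pos i.2, Subtype.coe_eta]
  have hsplit : ∀ α' : Fin n → ℝ, matA lam x α' = ∑ j, blkA lam x part j (blkOf part j α') := by
    intro α'
    rw [matA, ← Fintype.sum_fiberwise part (fun i => (α' i / (lam * (n:ℝ))) • x i)]
    rfl
  have hmatA : ∀ β, matA lam x (updBlk part k α β) = wbar + blkA lam x part k β := by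
    intro β
    rw [hsplit, add_comm wbar, ← Finset.add_sum_erase _ _ (Finset.mem_univ k)]
    congr 1
    · rw [hblkOfupd]
    · rw [hwbar]
      refine Finset.sum_congr rfl fun j hj => ?_
      have hjk : j ≠ k := Finset.ne_of_mem_erase hj
      refine congrArg _ (funext fun i => ?_)
      show updBlk part k α β i.1 = α i.1
      rw [updBlk, dif_neg]
      exact fun h => hjk (i.2.symm.trans h)
  -- conjugate-sum decomposition
  have hdual : ∀ β, dualObj lam x lstar (updBlk part k α β)
      = f β - (lam / 2 * sqnorm wbar
          + (1 / (n:ℝ)) * ∑ i ∈ Finset.univ.filter (fun i => ¬ part i = k), lstar i (-(α i))) := by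
    intro β
    have hsum := Finset.sum_filter_add_sum_filter_not Finset.univ (fun i => part i = k)
      (fun i => lstar i (-(updBlk part k α β i)))
    have h1 : ∑ i ∈ Finset.univ.filter (fun i => part i = k), lstar i (-(updBlk part k α β i))
        = ∑ i : {i : Fin n // part i = k}, lstar i.1 (-(β i)) := by
      rw [Finset.sum_subtype (p := fun i => part i = k) (Finset.univ.filter fun i => part i = k)
        (by simp) (fun i => lstar i (-(updBlk part k α β i)))]
      refine Finset.sum_congr rfl fun i _ => ?_
      rw [show updBlk part k α β i.1 = β i from by rw [updBlk, dif_pos i.2, Subtype.coe_eta]]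
    have h2 : ∑ i ∈ Finset.univ.filter (fun i => ¬ part i = k), lstar i (-(updBlk part k α β i))
        = ∑ i ∈ Finset.univ.filter (fun i => ¬ part i = k), lstar i (-(α i)) := by
      refine Finset.sum_congr rfl fun i hi => ?_
      have hnk' : ¬ part i = k := (Finset.mem_filter.mp hi).2
      rw [updBlk, dif_neg hnk']
    unfold dualObj
    rw [hmatA β, ← hsum, h1, h2, hfval β]
    ring
  -- weak duality
  have hweak : ∀ β v, f β ≤ locPrimal lam x l part k wbar v := by
    intro β v
    have hsum : (∑ i : {i : Fin n // part i = k},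
        ((-(β i)) * dotp (wbar + v) (x i.1) - l i.1 (dotp (wbar + v) (x i.1))))
        ≤ ∑ i : {i : Fin n // part i = k}, lstar i.1 (-(β i)) :=
      Finset.sum_le_sum fun i _ => fy (hconj i.1) _ _
    rw [Finset.sum_sub_distrib] at hsum
    have hneg : (∑ i : {i : Fin n // part i = k}, (-(β i)) * dotp (wbar + v) (x i.1))
        = -(lam * (n:ℝ) * dotp (wbar + v) (blkA lam x part k β)) := by
      rw [Finset.sum_congr rfl fun i (_ : i ∈ Finset.univ) =>
        (show (-(β i)) * dotp (wbar + v) (x i.1) = -(β i * dotp (wbar + v) (x i.1)) by ring),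
        Finset.sum_neg_distrib, hdot]
    rw [hneg] at hsum
    have hmul := mul_le_mul_of_nonneg_left hsum (le_of_lt (one_div_pos.mpr hnR))
    have hid : (1/(n:ℝ)) * (-(lam * (n:ℝ) * dotp (wbar + v) (blkA lam x part k β))
          - ∑ i : {i : Fin n // part i = k}, l i.1 (dotp (wbar + v) (x i.1)))
        = -(lam * dotp (wbar + v) (blkA lam x part k β))
          - (1/(n:ℝ)) * ∑ i : {i : Fin n // part i = k}, l i.1 (dotp (wbar + v) (x i.1)) := by
      field_simp
    rw [hid] at hmul
    have hE1 : sqnorm (wbar + blkA lam x part k β)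
        = sqnorm wbar + 2 * dotp wbar (blkA lam x part k β) + sqnorm (blkA lam x part k β) :=
      sqnorm_add _ _
    have hE2 : dotp (wbar + v) (blkA lam x part k β)
        = dotp wbar (blkA lam x part k β) + dotp v (blkA lam x part k β) := dotp_add_left _ _ _
    rw [hE2] at hmul
    have hq : 0 ≤ lam/2 * (sqnorm v - 2 * dotp v (blkA lam x part k β)
        + sqnorm (blkA lam x part k β)) :=
      mul_nonneg (by positivity) (sqnorm_sub_nonneg v (blkA lam x part k β))
    have hq2 : lam/2 * (sqnorm v - 2 * dotp v (blkA lam x part k β)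
          + sqnorm (blkA lam x part k β))
        = lam/2 * sqnorm v - lam * dotp v (blkA lam x part k β)
          + lam/2 * sqnorm (blkA lam x part k β) := by ring
    rw [hq2] at hq
    rw [hfval β]
    unfold locPrimal
    rw [hE1]
    linarith
  have hbdd : BddAbove (Set.range f) := by
    refine ⟨locPrimal lam x l part k wbar 0, ?_⟩
    rintro _ ⟨β, rfl⟩; exact hweak β 0
  set S := ⨆ β, f β with hSdef
  have hfS : ∀ β, f β ≤ S := fun β => le_ciSup hbdd β
  have hSP : ∀ v, S ≤ locPrimal lam x l part k wbar v := fun v => ciSup_le fun β => hweak β v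
  -- epsD identities
  have hupd2 : ∀ β' β, updBlk part k (updBlk part k α β') β = updBlk part k α β := by
    intro β' β; funext i; unfold updBlk; by_cases h : part i = k <;> simp [h]
  have hαeq : updBlk part k α (blkOf part k α) = α := by
    funext i; unfold updBlk blkOf; by_cases h : part i = k <;> simp [h]
  have heps : ∀ β', epsD lam x lstar part k (updBlk part k α β') = S - f β' := by
    intro β'
    unfold epsD
    simp only [hupd2, hdual, sub_sub_sub_cancel_right]
    exact ciSup_sub_const f hbdd (f β')
  have hepsα : epsD lam x lstar part k α = S - f (blkOf part k α) := by
    conv_lhs => rw [← hαeq]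
    exact heps _
  -- per-coordinate progress
  have hcoord : ∀ (β : {i : Fin n // part i = k} → ℝ) (i : {i : Fin n // part i = k}),
      f β + s / (n:ℝ) * (l i.1 (dotp (wbar + blkA lam x part k β) (x i.1))
        + lstar i.1 (-(β i)) + β i * dotp (wbar + blkA lam x part k β) (x i.1))
      ≤ f (st i β) := by
    intro β i
    set w := wbar + blkA lam x part k β with hwdef
    set z := dotp w (x i.1) with hzdef
    set D := deriv (l i.1) z with hDdef
    set c := β i + s * (-D - β i) with hcdef
    set δ := (c - β i) / (lam * (n:ℝ)) with hδdef
    have hQ0 : 0 ≤ sqnorm (x i.1) := sqnorm_nonneg _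
    have hQ1 : sqnorm (x i.1) ≤ 1 := sqnorm_le_one_of_euclNorm (hx i.1)
    -- blkA of the update
    have hexp : ∀ βv : {i : Fin n // part i = k} → ℝ, blkA lam x part k βv
        = (βv i / (lam*(n:ℝ))) • x i.1
          + ∑ j ∈ Finset.univ.erase i, (βv j / (lam*(n:ℝ))) • x j.1 := by
      intro βv; rw [blkA, ← Finset.add_sum_erase _ _ (Finset.mem_univ i)]
    have hupdA : blkA lam x part k (Function.update β i c) = blkA lam x part k β + δ • x i.1 := by
      rw [hexp, hexp β]
      rw [Finset.sum_congr rfl fun j hj => by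
        rw [Function.update_of_ne (Finset.ne_of_mem_erase hj)]]
      rw [Function.update_self]
      funext jj
      simp only [Pi.add_apply, Pi.smul_apply, smul_eq_mul]
      rw [hδdef]
      ring
    -- lstar sum of the update
    have hexpL : ∀ βv : {i : Fin n // part i = k} → ℝ,
        (∑ j : {i : Fin n // part i = k}, lstar j.1 (-(βv j)))
        = lstar i.1 (-(βv i)) + ∑ j ∈ Finset.univ.erase i, lstar j.1 (-(βv j)) := fun βv =>
      (Finset.add_sum_erase _ _ (Finset.mem_univ i)).symm
    have hupdL : (∑ j : {i : Fin n // part i = k}, lstar j.1 (-(Function.update β i c j)))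
        = (∑ j : {i : Fin n // part i = k}, lstar j.1 (-(β j)))
          - lstar i.1 (-(β i)) + lstar i.1 (-c) := by
      rw [hexpL, hexpL β, Function.update_self]
      rw [Finset.sum_congr rfl fun j hj => by
        rw [Function.update_of_ne (Finset.ne_of_mem_erase hj)]]
      ring
    -- value of f at the update
    have hwupd : wbar + blkA lam x part k (Function.update β i c) = w + δ • x i.1 := by
      rw [hupdA, ← add_assoc, ← hwdef]
    have hsqupd : sqnorm (w + δ • x i.1)
        = sqnorm w + 2 * (δ * z) + δ^2 * sqnorm (x i.1) := by
      rw [sqnorm_add, dotp_smul_right, sqnorm_smul, ← hzdef]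
    have hef : f (Function.update β i c) = f β - lam * (δ * z)
        - lam/2 * δ^2 * sqnorm (x i.1)
        - (1/(n:ℝ)) * (lstar i.1 (-c) - lstar i.1 (-(β i))) := by
      rw [hfval, hfval β, hwupd, hsqupd, hupdL, ← hwdef]
      ring
    -- conjugate combination bound
    have hcombo := conj_combo hγ (hconj i.1) (hconv i.1) (hsmooth i.1)
      (le_of_lt hs_pos) (le_of_lt hs_lt1) z (-(β i))
    rw [← hDdef] at hcombo
    have hcid : s * D + (1 - s) * (-(β i)) = -c := by rw [hcdef]; ring
    rw [hcid] at hcombo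
    have hsq' : D - -(β i) = D + β i := by ring
    rw [hsq'] at hcombo
    -- numeric identities
    have hδval : δ = -(s * (D + β i)) / (lam * (n:ℝ)) := by rw [hδdef, hcdef]; ring
    have hδz : -(lam * (δ * z)) = s * (D + β i) * z * (1/(n:ℝ)) := by
      rw [hδval]; field_simp
    have hδ2 : lam/2 * δ^2 = s * (D + β i)^2 * (γ * (1 - s)) / 2 * (1/(n:ℝ)) := by
      rw [hδval, ← hkey]; field_simp
    have hQb : lam/2 * δ^2 * sqnorm (x i.1) ≤ lam/2 * δ^2 := by
      have h0 : 0 ≤ lam/2 * δ^2 := by positivity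
      calc lam/2 * δ^2 * sqnorm (x i.1) ≤ lam/2 * δ^2 * 1 :=
            mul_le_mul_of_nonneg_left hQ1 h0
        _ = lam/2 * δ^2 := mul_one _
    have hmono := hst_max i β c
    refine le_trans ?_ hmono
    rw [hef]
    have key : (f β - lam * (δ * z) - lam/2 * δ^2
          - (1/(n:ℝ)) * (lstar i.1 (-c) - lstar i.1 (-(β i))))
          - (f β + s / (n:ℝ) * (l i.1 z + lstar i.1 (-(β i)) + β i * z))
        = (1/(n:ℝ)) * ((s * (D * z - l i.1 z) + (1 - s) * lstar i.1 (-(β i))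
            - γ / 2 * s * (1 - s) * (D + β i) ^ 2) - lstar i.1 (-c)) := by
      linear_combination hδz - hδ2
    have h0 : 0 ≤ (1/(n:ℝ)) * ((s * (D * z - l i.1 z) + (1 - s) * lstar i.1 (-(β i))
        - γ / 2 * s * (1 - s) * (D + β i) ^ 2) - lstar i.1 (-c)) :=
      mul_nonneg (by positivity) (by linarith [hcombo])
    linarith [key, h0, hQb]
  -- sum of gaps equals duality gap
  have hgsum : ∀ β : {i : Fin n // part i = k} → ℝ,
      (∑ i : {i : Fin n // part i = k}, (l i.1 (dotp (wbar + blkA lam x part k β) (x i.1))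
        + lstar i.1 (-(β i)) + β i * dotp (wbar + blkA lam x part k β) (x i.1)))
      = (n:ℝ) * (locPrimal lam x l part k wbar (blkA lam x part k β) - f β) := by
    intro β
    rw [Finset.sum_add_distrib, Finset.sum_add_distrib, hdot (wbar + blkA lam x part k β) β]
    have hE1 : sqnorm (wbar + blkA lam x part k β)
        = sqnorm wbar + 2 * dotp wbar (blkA lam x part k β) + sqnorm (blkA lam x part k β) :=
      sqnorm_add _ _
    have hE2 : dotp (wbar + blkA lam x part k β) (blkA lam x part k β)
        = dotp wbar (blkA lam x part k β) + sqnorm (blkA lam x part k β) := by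
      rw [dotp_add_left, dotp_self]
    rw [hE2, hfval β]
    unfold locPrimal
    rw [hE1]
    field_simp
    ring
  -- per-step inequality
  have hstep : ∀ β : {i : Fin n // part i = k} → ℝ,
      (∑ i : {i : Fin n // part i = k}, (S - f (st i β))) ≤ ((nk:ℝ) - s) * (S - f β) := by
    intro β
    have h1 : ∀ i : {i : Fin n // part i = k},
        S - f (st i β) ≤ S - f β - s / (n:ℝ) * (l i.1 (dotp (wbar + blkA lam x part k β) (x i.1))
          + lstar i.1 (-(β i)) + β i * dotp (wbar + blkA lam x part k β) (x i.1)) := by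
      intro i; have := hcoord β i; linarith
    calc (∑ i : {i : Fin n // part i = k}, (S - f (st i β)))
        ≤ ∑ i : {i : Fin n // part i = k}, (S - f β - s / (n:ℝ)
            * (l i.1 (dotp (wbar + blkA lam x part k β) (x i.1))
              + lstar i.1 (-(β i)) + β i * dotp (wbar + blkA lam x part k β) (x i.1))) :=
          Finset.sum_le_sum fun i _ => h1 i
      _ = (nk:ℝ) * (S - f β) - s / (n:ℝ) * ((n:ℝ)
            * (locPrimal lam x l part k wbar (blkA lam x part k β) - f β)) := by
          rw [Finset.sum_sub_distrib, ← Finset.mul_sum, hgsum β, Finset.sum_const,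
            Finset.card_univ, ← hnkdef, nsmul_eq_mul]
      _ = (nk:ℝ) * (S - f β) - s * (locPrimal lam x l part k wbar (blkA lam x part k β) - f β) := by
          field_simp
      _ ≤ (nk:ℝ) * (S - f β) - s * (S - f β) := by
          have := hSP (blkA lam x part k β)
          nlinarith [hs_pos]
      _ = ((nk:ℝ) - s) * (S - f β) := by ring
  -- iterate
  have hnks : 0 ≤ (nk:ℝ) - s := by linarith
  have hiter : ∀ (m : ℕ) (β : {i : Fin n // part i = k} → ℝ),
      (∑ ω : Fin m → {i : Fin n // part i = k}, (S - f (iterRun st m ω β)))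
        ≤ ((nk:ℝ) - s) ^ m * (S - f β) := by
    intro m
    induction m with
    | zero =>
      intro β
      have hcard : Fintype.card (Fin 0 → {i : Fin n // part i = k}) = 1 := by simp
      rw [show (∑ ω : Fin 0 → {i : Fin n // part i = k}, (S - f (iterRun st 0 ω β)))
          = ∑ _ω : Fin 0 → {i : Fin n // part i = k}, (S - f β) from rfl,
        Finset.sum_const, Finset.card_univ, hcard, pow_zero, one_smul, one_mul]
    | succ m ih =>
      intro β
      rw [← Equiv.sum_comp (Fin.consEquiv (fun _ : Fin (m+1) => {i : Fin n // part i = k}))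
        (fun ω => S - f (iterRun st (m+1) ω β)), Fintype.sum_prod_type]
      have hred : ∀ (i : {i : Fin n // part i = k}) (ω' : Fin m → {i : Fin n // part i = k}),
          iterRun st (m+1) ((Fin.consEquiv (fun _ : Fin (m+1) => {i : Fin n // part i = k})) (i, ω')) β
            = iterRun st m ω' (st i β) := by
        intro i ω'
        have e : (Fin.consEquiv fun _ : Fin (m+1) => {i : Fin n // part i = k}) (i, ω')
            = Fin.cons i ω' := rfl
        rw [e]
        simp only [iterRun, Fin.cons_zero, Fin.cons_succ]
      calc (∑ i : {i : Fin n // part i = k}, ∑ ω' : Fin m → {i : Fin n // part i = k},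
              (S - f (iterRun st (m+1) ((Fin.consEquiv fun _ => {i : Fin n // part i = k}) (i, ω')) β)))
          = ∑ i : {i : Fin n // part i = k}, ∑ ω' : Fin m → {i : Fin n // part i = k},
              (S - f (iterRun st m ω' (st i β))) := by
            refine Finset.sum_congr rfl fun i _ => Finset.sum_congr rfl fun ω' _ => ?_
            rw [hred]
        _ ≤ ∑ i : {i : Fin n // part i = k}, ((nk:ℝ) - s) ^ m * (S - f (st i β)) :=
            Finset.sum_le_sum fun i _ => ih (st i β)
        _ = ((nk:ℝ) - s) ^ m * ∑ i : {i : Fin n // part i = k}, (S - f (st i β)) := by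
            rw [Finset.mul_sum]
        _ ≤ ((nk:ℝ) - s) ^ m * (((nk:ℝ) - s) * (S - f β)) :=
            mul_le_mul_of_nonneg_left (hstep β) (pow_nonneg hnks m)
        _ = ((nk:ℝ) - s) ^ (m+1) * (S - f β) := by rw [pow_succ]; ring
  -- final assembly
  have hntR : (1:ℝ) ≤ (ntilde:ℝ) := by
    have : 1 ≤ ntilde := le_trans hnk1 hnknt
    exact_mod_cast this
  have hntpos : (0:ℝ) < (ntilde:ℝ) := by linarith
  have hnkpos : (0:ℝ) < (nk:ℝ) := by linarith
  have hratio : ((nk:ℝ) - s) / (nk:ℝ) ≤ 1 - lam * ↑n * γ / (1 + lam * ↑n * γ) * (1 / (ntilde:ℝ)) := by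
    have h1 : ((nk:ℝ) - s) / (nk:ℝ) = 1 - s / (nk:ℝ) := by field_simp
    have h2 : s / (ntilde:ℝ) ≤ s / (nk:ℝ) := by
      apply div_le_div_of_nonneg_left (le_of_lt hs_pos) hnkpos
      exact_mod_cast hnknt
    rw [h1, ← hsdef]
    have : s * (1 / (ntilde:ℝ)) = s / (ntilde:ℝ) := by ring
    rw [this]
    linarith
  have hratio0 : 0 ≤ ((nk:ℝ) - s) / (nk:ℝ) := div_nonneg hnks (le_of_lt hnkpos)
  have hgap0 : 0 ≤ S - f (blkOf part k α) := by linarith [hfS (blkOf part k α)]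
  have main := hiter H (blkOf part k α)
  have hLHS : (∑ ω : Fin H → {i : Fin n // part i = k},
      epsD lam x lstar part k (updBlk part k α (iterRun st H ω (blkOf part k α))))
      = ∑ ω : Fin H → {i : Fin n // part i = k}, (S - f (iterRun st H ω (blkOf part k α))) :=
    Finset.sum_congr rfl fun ω _ => heps _
  rw [hLHS, hepsα]
  calc (∑ ω : Fin H → {i : Fin n // part i = k}, (S - f (iterRun st H ω (blkOf part k α))))
        / (nk:ℝ) ^ H
      ≤ (((nk:ℝ) - s) ^ H * (S - f (blkOf part k α))) / (nk:ℝ) ^ H := by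
        have hpow : (0:ℝ) < (nk:ℝ)^H := pow_pos hnkpos H
        gcongr
    _ = (((nk:ℝ) - s) / (nk:ℝ)) ^ H * (S - f (blkOf part k α)) := by
        rw [div_pow]; ring
    _ ≤ (1 - lam * ↑n * γ / (1 + lam * ↑n * γ) * (1 / (ntilde:ℝ))) ^ H * (S - f (blkOf part k α)) := by
        apply mul_le_mul_of_nonneg_right (pow_le_pow_left₀ hratio0 hratio H) hgap0
end
end

section
/- Assume each conjugate ℓ_i* is γ-strongly convex with γ ≥ 0. Then the dual objective D satisfies the strong concavity estimate: for all α, α̂ ∈ ℝ^n and all η ∈ [0,1], D(η·α̂ + (1−η)·α) ≥ η·D(α̂) + (1−η)·D(α) + (γ·η·(1−η)/(2n))·‖α̂ − α‖². -/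
open Finset MeasureTheory

noncomputable section

variable {n d K : ℕ}

/-- strong concavity estimate for the dual objective. -/
theorem dual_strong_concavity
    (n d : ℕ) (hn : 0 < n) (hd : 0 < d)
    (lam γ : ℝ) (hlam : 0 < lam) (hγ : 0 ≤ γ)
    (x : Fin n → Fin d → ℝ)
    (l lstar : Fin n → ℝ → ℝ)
    (hconj : ∀ i, IsFenchelConj (l i) (lstar i))
    (hstrong : ∀ i, StrongConvexWith γ (lstar i))
    (α αhat : Fin n → ℝ) (η : ℝ) (hη0 : 0 ≤ η) (hη1 : η ≤ 1) :
    η * dualObj lam x lstar αhat + (1 - η) * dualObj lam x lstar α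
        + γ * η * (1 - η) / (2 * n) * sqnorm (αhat - α)
      ≤ dualObj lam x lstar (η • αhat + (1 - η) • α) := by
  
  have hA : ∀ j, matA lam x (η • αhat + (1 - η) • α) j
      = η * matA lam x αhat j + (1 - η) * matA lam x α j := by
    intro j
    simp only [matA, Finset.sum_apply, Pi.smul_apply, smul_eq_mul, Pi.add_apply]
    rw [Finset.mul_sum, Finset.mul_sum, ← Finset.sum_add_distrib]
    exact Finset.sum_congr rfl fun i _ => by ring
  have hA' : ∀ j, matA lam x (αhat - α) j = matA lam x αhat j - matA lam x α j := by
    intro j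
    simp only [matA, Finset.sum_apply, Pi.smul_apply, smul_eq_mul, Pi.sub_apply]
    rw [← Finset.sum_sub_distrib]
    exact Finset.sum_congr rfl fun i _ => by ring
  have hsq : sqnorm (matA lam x (η • αhat + (1 - η) • α))
      + η * (1 - η) * sqnorm (matA lam x (αhat - α))
      = η * sqnorm (matA lam x αhat) + (1 - η) * sqnorm (matA lam x α) := by
    simp only [sqnorm]
    rw [Finset.mul_sum, Finset.mul_sum, Finset.mul_sum, ← Finset.sum_add_distrib,
      ← Finset.sum_add_distrib]
    refine Finset.sum_congr rfl fun j _ => ?_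
    rw [hA j, hA' j]; ring
  have hdnn : (0:ℝ) ≤ sqnorm (matA lam x (αhat - α)) :=
    Finset.sum_nonneg fun j _ => sq_nonneg _
  have key : ∀ i : Fin n,
      lstar i (-((η • αhat + (1 - η) • α) i)) + γ / 2 * (η * (1 - η)) * (αhat i - α i) ^ 2
        ≤ η * lstar i (-(αhat i)) + (1 - η) * lstar i (-(α i)) := by
    intro i
    have h : lstar i (η • (-(αhat i)) + (1 - η) • (-(α i)))
        - γ / 2 * (η • (-(αhat i)) + (1 - η) • (-(α i))) ^ 2
        ≤ η • (lstar i (-(αhat i)) - γ / 2 * (-(αhat i)) ^ 2)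
          + (1 - η) • (lstar i (-(α i)) - γ / 2 * (-(α i)) ^ 2) :=
      (hstrong i).2 (Set.mem_univ (-(αhat i)))
        (Set.mem_univ (-(α i))) hη0 (by linarith) (by ring)
    simp only [smul_eq_mul] at h
    have hc : η * -(αhat i) + (1 - η) * -(α i) = -((η • αhat + (1 - η) • α) i) := by
      simp only [Pi.add_apply, Pi.smul_apply, smul_eq_mul]; ring
    rw [hc] at h
    have hexp : γ / 2 * (-((η • αhat + (1 - η) • α) i)) ^ 2
        = γ / 2 * (η * -(αhat i) + (1 - η) * -(α i)) ^ 2 := by rw [hc]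
    have hid : γ / 2 * (η * -(αhat i) + (1 - η) * -(α i)) ^ 2
        = η * (γ / 2 * (-(αhat i)) ^ 2) + (1 - η) * (γ / 2 * (-(α i)) ^ 2)
          - γ / 2 * (η * (1 - η)) * (αhat i - α i) ^ 2 := by ring
    nlinarith [h, hexp, hid]
  have hsum : ∑ i, lstar i (-((η • αhat + (1 - η) • α) i))
      + γ / 2 * (η * (1 - η)) * sqnorm (αhat - α)
      ≤ η * ∑ i, lstar i (-(αhat i)) + (1 - η) * ∑ i, lstar i (-(α i)) := by
    have : sqnorm (αhat - α) = ∑ i, (αhat i - α i) ^ 2 := by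
      simp [sqnorm, Pi.sub_apply]
    rw [this, Finset.mul_sum, Finset.mul_sum, Finset.mul_sum, ← Finset.sum_add_distrib,
      ← Finset.sum_add_distrib]
    exact Finset.sum_le_sum fun i _ => key i
  have hn' : (0:ℝ) < (n:ℝ) := by exact_mod_cast hn
  have hinv : (0:ℝ) < 1 / (n:ℝ) := by positivity
  simp only [dualObj]
  have hηη : 0 ≤ η * (1 - η) := mul_nonneg hη0 (by linarith)
  have h1 : lam / 2 * (η * (1 - η) * sqnorm (matA lam x (αhat - α))) ≥ 0 := by positivity
  have h2 : (1 / (n:ℝ)) * (∑ i, lstar i (-((η • αhat + (1 - η) • α) i))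
      + γ / 2 * (η * (1 - η)) * sqnorm (αhat - α))
      ≤ (1 / (n:ℝ)) * (η * ∑ i, lstar i (-(αhat i)) + (1 - η) * ∑ i, lstar i (-(α i))) :=
    mul_le_mul_of_nonneg_left hsum (le_of_lt hinv)
  have h3 : -(lam / 2) * sqnorm (matA lam x (η • αhat + (1 - η) • α))
      = -(lam / 2) * (η * sqnorm (matA lam x αhat) + (1 - η) * sqnorm (matA lam x α))
        + lam / 2 * (η * (1 - η) * sqnorm (matA lam x (αhat - α))) := by
    have := hsq
    nlinarith [hsq]
  have hdiv : γ * η * (1 - η) / (2 * (n:ℝ)) = (1 / (n:ℝ)) * (γ / 2 * (η * (1 - η))) := by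
    field_simp
  rw [hdiv]
  nlinarith [h1, h2, h3]
end
end

section
/- For every real σ ≥ σ_min and all α, α̂ ∈ ℝ^n, the sum of the local suboptimalities dominates the σ-regularized global improvement: Σ_{k=1}^K ε_{D,k}(α) ≥ D(α̂) − D(α) − (σ/(2λn²))·‖α̂ − α‖². -/
open Finset MeasureTheory

noncomputable section

variable {n d K : ℕ}

/-! ### Auxiliary lemmas -/

lemma aux_sqnorm_nonneg {m : ℕ} (v : Fin m → ℝ) : 0 ≤ sqnorm v :=
  Finset.sum_nonneg fun _ _ => sq_nonneg _

lemma aux_sqnorm_pos {m : ℕ} {v : Fin m → ℝ} (h : v ≠ 0) : 0 < sqnorm v := by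
  obtain ⟨j, hj⟩ := Function.ne_iff.1 h
  exact Finset.sum_pos' (fun i _ => sq_nonneg _)
    ⟨j, Finset.mem_univ j, (sq_nonneg _).lt_of_ne (Ne.symm (pow_ne_zero 2 hj))⟩

lemma aux_sqnorm_add {m : ℕ} (v w : Fin m → ℝ) :
    sqnorm (v + w) = sqnorm v + 2 * dotp v w + sqnorm w := by
  simp only [sqnorm, dotp, Pi.add_apply, Finset.mul_sum]
  rw [← Finset.sum_add_distrib, ← Finset.sum_add_distrib]
  exact Finset.sum_congr rfl fun j _ => by ring

lemma aux_matA_apply (lam : ℝ) (x : Fin n → Fin d → ℝ) (v : Fin n → ℝ) (j : Fin d) :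
    matA lam x v j = ∑ i, v i / (lam * n) * x i j := by
  simp [matA, Finset.sum_apply]

lemma aux_blkA_apply (lam : ℝ) (x : Fin n → Fin d → ℝ) (part : Fin n → Fin K) (k : Fin K)
    (β : {i : Fin n // part i = k} → ℝ) (j : Fin d) :
    blkA lam x part k β j = ∑ i : {i : Fin n // part i = k}, β i / (lam * n) * x i.1 j := by
  simp [blkA, Finset.sum_apply]

lemma aux_matA_add (lam : ℝ) (x : Fin n → Fin d → ℝ) (v w : Fin n → ℝ) :
    matA lam x (v + w) = matA lam x v + matA lam x w := by
  funext j
  simp only [Pi.add_apply, aux_matA_apply, add_div, add_mul, Finset.sum_add_distrib]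

lemma aux_matA_sum (lam : ℝ) (x : Fin n → Fin d → ℝ) {κ : Type*} (s : Finset κ)
    (v : κ → Fin n → ℝ) :
    matA lam x (∑ k ∈ s, v k) = ∑ k ∈ s, matA lam x (v k) := by
  funext j
  rw [Finset.sum_apply]
  simp only [aux_matA_apply, Finset.sum_apply, Finset.sum_div, Finset.sum_mul]
  exact Finset.sum_comm

lemma aux_dotp_sum {m : ℕ} {κ : Type*} (s : Finset κ) (v : Fin m → ℝ)
    (w : κ → Fin m → ℝ) :
    dotp v (∑ k ∈ s, w k) = ∑ k ∈ s, dotp v (w k) := by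
  simp only [dotp, Finset.sum_apply, Finset.mul_sum]
  exact Finset.sum_comm

lemma aux_sum_subtype_ite {n : ℕ} (p : Fin n → Prop) [DecidablePred p] (f : Fin n → ℝ) :
    (∑ i : {i // p i}, f i.1) = ∑ i, if p i then f i else 0 := by
  rw [← Finset.sum_filter]
  exact (Finset.sum_subtype (Finset.univ.filter p) (by simp) f).symm

lemma aux_sum_fiber {n K : ℕ} (part : Fin n → Fin K) (f : Fin n → ℝ) :
    (∑ k, ∑ i, if part i = k then f i else 0) = ∑ i, f i := by
  rw [Finset.sum_comm]
  exact Finset.sum_congr rfl fun i _ => by simp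

/-- the sum of local suboptimalities dominates the
`σ`-regularized global improvement. -/
theorem sum_eps_ge_regularized_improvement
    (n d K : ℕ) (hn : 0 < n) (hd : 0 < d) (hK : 0 < K)
    (lam : ℝ) (hlam : 0 < lam)
    (x : Fin n → Fin d → ℝ)
    (l lstar : Fin n → ℝ → ℝ)
    (hconj : ∀ i, IsFenchelConj (l i) (lstar i))
    (part : Fin n → Fin K) (hpart : ∀ k, ∃ i, part i = k)
    (σ : ℝ) (hσ : sigmaMin lam x part ≤ σ)
    (α αhat : Fin n → ℝ) :
    dualObj lam x lstar αhat - dualObj lam x lstar α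
        - σ / (2 * lam * (n : ℝ) ^ 2) * sqnorm (αhat - α)
      ≤ ∑ k, epsD lam x lstar part k α := by
  classical
  have hn' : (0:ℝ) < n := by exact_mod_cast hn
  set Δ : Fin n → ℝ := αhat - α with hΔdef
  set u : Fin K → Fin n → ℝ := fun k i => if part i = k then Δ i else 0 with hudef
  have hlb : ∀ i v, -(l i 0) ≤ lstar i v := fun i v => by
    simpa using (hconj i v).1 ⟨0, rfl⟩
  -- Step 1: boundedness of the local suprema
  have hbdd : ∀ k, BddAbove (Set.range fun β : {i : Fin n // part i = k} → ℝ =>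
      dualObj lam x lstar (updBlk part k α β) - dualObj lam x lstar α) := by
    intro k
    refine ⟨-(1/(n:ℝ)) * (∑ i, if part i = k then -(l i 0) else lstar i (-(α i)))
        - dualObj lam x lstar α, ?_⟩
    rintro y ⟨β, rfl⟩
    refine sub_le_sub_right ?_ _
    have h2 : (∑ i, if part i = k then -(l i 0) else lstar i (-(α i)))
        ≤ ∑ i, lstar i (-(updBlk part k α β i)) := by
      refine Finset.sum_le_sum fun i _ => ?_
      by_cases h : part i = k
      · simp only [updBlk, h, dif_pos, if_pos]
        exact hlb i _
      · simp [updBlk, h]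
    have h3 : (0:ℝ) ≤ sqnorm (matA lam x (updBlk part k α β)) := aux_sqnorm_nonneg _
    have h5 := mul_le_mul_of_nonneg_left h2 (by positivity : (0:ℝ) ≤ 1/(n:ℝ))
    have h6 : 0 ≤ lam / 2 * sqnorm (matA lam x (updBlk part k α β)) := by positivity
    rw [dualObj]
    linarith
  -- Step 2: ε_k dominates the block update towards αhat
  have hstep : ∀ k, dualObj lam x lstar (α + u k) - dualObj lam x lstar α
      ≤ epsD lam x lstar part k α := by
    intro k
    have hupd : updBlk part k α (blkOf part k αhat) = α + u k := by
      funext i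
      by_cases h : part i = k
      · simp only [updBlk, blkOf, h, dif_pos, hudef, Pi.add_apply, if_pos, hΔdef,
          Pi.sub_apply]
        ring
      · simp [updBlk, h, hudef]
    have h := le_ciSup (hbdd k) (blkOf part k αhat)
    rw [hupd] at h
    simpa [epsD] using h
  -- Step 3: exact per-block identity
  have hDk : ∀ k, dualObj lam x lstar (α + u k) - dualObj lam x lstar α
      = -(lam) * dotp (matA lam x α) (matA lam x (u k))
        - lam/2 * sqnorm (matA lam x (u k))
        - (1/(n:ℝ)) * ∑ i, (if part i = k
            then lstar i (-(αhat i)) - lstar i (-(α i)) else 0) := by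
    intro k
    have hsq : sqnorm (matA lam x (α + u k))
        = sqnorm (matA lam x α) + 2 * dotp (matA lam x α) (matA lam x (u k))
          + sqnorm (matA lam x (u k)) := by
      rw [aux_matA_add, aux_sqnorm_add]
    have hl : (∑ i, lstar i (-((α + u k) i)))
        = (∑ i, lstar i (-(α i)))
          + ∑ i, (if part i = k then lstar i (-(αhat i)) - lstar i (-(α i)) else 0) := by
      rw [← Finset.sum_add_distrib]
      refine Finset.sum_congr rfl fun i _ => ?_
      by_cases h : part i = k
      · simp only [Pi.add_apply, hudef, if_pos h, hΔdef, Pi.sub_apply]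
        have h2 : α i + (αhat i - α i) = αhat i := by ring
        rw [h2]; ring
      · simp [hudef, h]
    simp only [dualObj, hsq, hl]
    ring
  -- Step 4: identity for the full update
  have hDhat : dualObj lam x lstar αhat - dualObj lam x lstar α
      = -(lam) * dotp (matA lam x α) (matA lam x Δ)
        - lam/2 * sqnorm (matA lam x Δ)
        - (1/(n:ℝ)) * ∑ i, (lstar i (-(αhat i)) - lstar i (-(α i))) := by
    have hhat : αhat = α + Δ := by funext i; simp [hΔdef]
    have hsq : sqnorm (matA lam x αhat)
        = sqnorm (matA lam x α) + 2 * dotp (matA lam x α) (matA lam x Δ)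
          + sqnorm (matA lam x Δ) := by
      conv_lhs => rw [hhat]
      rw [aux_matA_add, aux_sqnorm_add]
    have hl : (∑ i, lstar i (-(αhat i)))
        = (∑ i, lstar i (-(α i))) + ∑ i, (lstar i (-(αhat i)) - lstar i (-(α i))) := by
      rw [← Finset.sum_add_distrib]
      exact Finset.sum_congr rfl fun i _ => by ring
    simp only [dualObj, hsq, hl]
    ring
  -- Step 5: summing the per-block identities
  have hFu_sum : (∑ k, u k) = Δ := by
    funext i
    simp [hudef, Finset.sum_apply, Finset.sum_ite_eq]
  have h1 : (∑ k, dotp (matA lam x α) (matA lam x (u k)))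
      = dotp (matA lam x α) (matA lam x Δ) := by
    rw [← aux_dotp_sum, ← aux_matA_sum, hFu_sum]
  have hfib : (∑ k, ∑ i, if part i = k
      then lstar i (-(αhat i)) - lstar i (-(α i)) else 0)
      = ∑ i, (lstar i (-(αhat i)) - lstar i (-(α i))) :=
    aux_sum_fiber part _
  have hsum : (∑ k, (dualObj lam x lstar (α + u k) - dualObj lam x lstar α))
      = dualObj lam x lstar αhat - dualObj lam x lstar α
        - lam/2 * ((∑ k, sqnorm (matA lam x (u k))) - sqnorm (matA lam x Δ)) := by
    have e1 : (∑ k, (dualObj lam x lstar (α + u k) - dualObj lam x lstar α))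
        = ∑ k, (-(lam) * dotp (matA lam x α) (matA lam x (u k))
            - lam/2 * sqnorm (matA lam x (u k))
            - (1/(n:ℝ)) * ∑ i, (if part i = k
                then lstar i (-(αhat i)) - lstar i (-(α i)) else 0)) :=
      Finset.sum_congr rfl fun k _ => hDk k
    rw [e1]
    simp only [Finset.sum_sub_distrib, ← Finset.mul_sum]
    rw [h1, hfib, hDhat]
    ring
  -- Step 6: relating matA of padded blocks to blkA
  have hblk : ∀ k, matA lam x (u k) = blkA lam x part k (blkOf part k Δ) := by
    intro k
    funext j
    rw [aux_blkA_apply]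
    simp only [blkOf]
    rw [aux_sum_subtype_ite (fun i => part i = k) (fun i => Δ i / (lam * n) * x i j),
      aux_matA_apply]
    refine Finset.sum_congr rfl fun i _ => ?_
    by_cases h : part i = k <;> simp [hudef, h]
  -- Step 7: the σ bound
  have hq : lam/2 * ((∑ k, sqnorm (matA lam x (u k))) - sqnorm (matA lam x Δ))
      ≤ σ/(2*lam*(n:ℝ)^2) * sqnorm Δ := by
    by_cases hΔ0 : Δ = 0
    · have hu0 : ∀ k, u k = (0 : Fin n → ℝ) := by
        intro k; funext i; simp [hudef, hΔ0]
      have hm0 : matA lam x (0 : Fin n → ℝ) = 0 := by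
        funext j; simp [aux_matA_apply]
      have hs0 : sqnorm (0 : Fin d → ℝ) = 0 := by simp [sqnorm]
      simp [hΔ0, hu0, hm0, hs0, sqnorm]
    · have hN : 0 < sqnorm Δ := aux_sqnorm_pos hΔ0
      have hSbdd : BddAbove { r : ℝ | ∃ γ : Fin n → ℝ, γ ≠ 0 ∧
          r = lam ^ 2 * (n : ℝ) ^ 2 *
            ((∑ k, sqnorm (blkA lam x part k (blkOf part k γ))) - sqnorm (matA lam x γ)) /
              sqnorm γ } := by
        refine ⟨∑ i, ∑ j, (x i j)^2, ?_⟩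
        rintro r ⟨γ, hγ, rfl⟩
        have hNγ : 0 < sqnorm γ := aux_sqnorm_pos hγ
        have ht : 0 ≤ sqnorm (matA lam x γ) := aux_sqnorm_nonneg _
        have hc2 : (0:ℝ) < (lam*(n:ℝ))^2 := by positivity
        have hCk : ∀ k, sqnorm (blkA lam x part k (blkOf part k γ))
            ≤ (∑ i : {i // part i = k}, (γ i.1)^2) / (lam*(n:ℝ))^2
              * (∑ i : {i // part i = k}, ∑ j, (x i.1 j)^2) := by
          intro k
          have hCS : ∀ j, (blkA lam x part k (blkOf part k γ) j)^2
              ≤ (∑ i : {i // part i = k}, (γ i.1 / (lam*(n:ℝ)))^2)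
                * (∑ i : {i // part i = k}, (x i.1 j)^2) := by
            intro j
            rw [aux_blkA_apply]
            exact Finset.sum_mul_sq_le_sq_mul_sq Finset.univ _ _
          calc sqnorm (blkA lam x part k (blkOf part k γ))
              ≤ ∑ j, ((∑ i : {i // part i = k}, (γ i.1 / (lam*(n:ℝ)))^2)
                  * (∑ i : {i // part i = k}, (x i.1 j)^2)) :=
                Finset.sum_le_sum fun j _ => hCS j
            _ = (∑ i : {i // part i = k}, (γ i.1 / (lam*(n:ℝ)))^2)
                  * ∑ j, ∑ i : {i // part i = k}, (x i.1 j)^2 := by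
                rw [Finset.mul_sum]
            _ = (∑ i : {i // part i = k}, (γ i.1)^2) / (lam*(n:ℝ))^2
                  * (∑ i : {i // part i = k}, ∑ j, (x i.1 j)^2) := by
                rw [Finset.sum_comm]
                congr 1
                rw [Finset.sum_div]
                exact Finset.sum_congr rfl fun i _ => by rw [div_pow]
        have hPk : ∀ k, (∑ i : {i // part i = k}, (γ i.1)^2) ≤ sqnorm γ := by
          intro k
          rw [aux_sum_subtype_ite (fun i => part i = k) (fun i => (γ i)^2)]
          refine Finset.sum_le_sum fun i _ => ?_
          split_ifs
          · exact le_refl _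
          · exact sq_nonneg _
        have hQnn : ∀ k : Fin K, (0:ℝ) ≤ ∑ i : {i // part i = k}, ∑ j, (x i.1 j)^2 :=
          fun k => Finset.sum_nonneg fun i _ => Finset.sum_nonneg fun j _ => sq_nonneg _
        have hQ : (∑ k, ∑ i : {i // part i = k}, ∑ j, (x i.1 j)^2)
            = ∑ i, ∑ j, (x i j)^2 := by
          rw [← aux_sum_fiber part (fun i => ∑ j, (x i j)^2)]
          exact Finset.sum_congr rfl fun k _ =>
            aux_sum_subtype_ite (fun i => part i = k) (fun i => ∑ j, (x i j)^2)
        have hkey : lam^2*(n:ℝ)^2 * (∑ k, sqnorm (blkA lam x part k (blkOf part k γ)))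
            ≤ sqnorm γ * ∑ i, ∑ j, (x i j)^2 := by
          calc lam^2*(n:ℝ)^2 * (∑ k, sqnorm (blkA lam x part k (blkOf part k γ)))
              ≤ lam^2*(n:ℝ)^2 * ∑ k, ((∑ i : {i // part i = k}, (γ i.1)^2) / (lam*(n:ℝ))^2
                  * (∑ i : {i // part i = k}, ∑ j, (x i.1 j)^2)) := by
                exact mul_le_mul_of_nonneg_left
                  (Finset.sum_le_sum fun k _ => hCk k) (by positivity)
            _ = ∑ k, ((∑ i : {i // part i = k}, (γ i.1)^2)
                  * (∑ i : {i // part i = k}, ∑ j, (x i.1 j)^2)) := by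
                rw [Finset.mul_sum]
                refine Finset.sum_congr rfl fun k _ => ?_
                field_simp
            _ ≤ ∑ k, (sqnorm γ * (∑ i : {i // part i = k}, ∑ j, (x i.1 j)^2)) :=
                Finset.sum_le_sum fun k _ =>
                  mul_le_mul_of_nonneg_right (hPk k) (hQnn k)
            _ = sqnorm γ * ∑ k, ∑ i : {i // part i = k}, ∑ j, (x i.1 j)^2 := by
                rw [Finset.mul_sum]
            _ = sqnorm γ * ∑ i, ∑ j, (x i j)^2 := by rw [hQ]
        rw [div_le_iff₀ hNγ]
        nlinarith [mul_nonneg (mul_nonneg (sq_nonneg lam) (sq_nonneg ((n:ℝ)))) ht]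
      have hmem : lam ^ 2 * (n : ℝ) ^ 2 *
            ((∑ k, sqnorm (blkA lam x part k (blkOf part k Δ))) - sqnorm (matA lam x Δ)) /
              sqnorm Δ ∈ { r : ℝ | ∃ γ : Fin n → ℝ, γ ≠ 0 ∧
          r = lam ^ 2 * (n : ℝ) ^ 2 *
            ((∑ k, sqnorm (blkA lam x part k (blkOf part k γ))) - sqnorm (matA lam x γ)) /
              sqnorm γ } := ⟨Δ, hΔ0, rfl⟩
      have hrle := le_trans (le_csSup hSbdd hmem) hσ
      rw [div_le_iff₀ hN] at hrle
      have hpos : (0:ℝ) < 2*lam*(n:ℝ)^2 := by positivity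
      simp only [hblk]
      rw [div_mul_eq_mul_div σ, le_div_iff₀ hpos]
      nlinarith [hrle]
  -- Conclusion
  have hfinal := Finset.sum_le_sum fun k (_ : k ∈ Finset.univ) => hstep k
  rw [hsum] at hfinal
  linarith
end
end

section
/- Assume ℓ : ℝ → ℝ is convex and its conjugate ℓ* is γ-strongly convex with γ ≥ 0. Fix x ∈ ℝ^d, w ∈ ℝ^d, a current dual value a ∈ ℝ, and u ∈ ℝ with −u ∈ ∂ℓ(xᵀw) (∂ denoting the subdifferential). Then for every s ∈ [0,1], the optimal single-coordinate dual ascent step satisfies: sup_{Δ∈ℝ} [ −ℓ*(−(a+Δ)) − (λn/2)·‖w + (Δ/(λn))·x‖² ] − [ −ℓ*(−a) − (λn/2)·‖w‖² ] ≥ s·[ ℓ(xᵀw) + ℓ*(−a) + a·xᵀw + (1/2)·(γ·(1−s) − (s/(λn))·‖x‖²)·(u − a)² ], where λ > 0 and n ≥ 1 are fixed. -/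
open Finset MeasureTheory

noncomputable section

variable {n d K : ℕ}

/-- improvement of the optimal single-coordinate dual ascent step. -/
theorem single_coordinate_step_improvement
    (n : ℕ) (hn : 0 < n) (lam : ℝ) (hlam : 0 < lam) (d : ℕ)
    (l lstar : ℝ → ℝ)
    (hconj : IsFenchelConj l lstar)
    (hconv : ConvexOn ℝ Set.univ l)
    (γ : ℝ) (hγ : 0 ≤ γ) (hstrong : StrongConvexWith γ lstar)
    (x w : Fin d → ℝ) (a u : ℝ)
    -- −u ∈ ∂ℓ(xᵀw)
    (hu : ∀ y : ℝ, l (dotp x w) + (-u) * (y - dotp x w) ≤ l y)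
    (s : ℝ) (hs0 : 0 ≤ s) (hs1 : s ≤ 1) :
    s * (l (dotp x w) + lstar (-a) + a * dotp x w
        + 1 / 2 * (γ * (1 - s) - s / (lam * n) * sqnorm x) * (u - a) ^ 2)
      ≤ (⨆ Δ : ℝ, (-(lstar (-(a + Δ)))
            - lam * n / 2 * sqnorm (w + (Δ / (lam * n)) • x)))
        - (-(lstar (-a)) - lam * n / 2 * sqnorm w) := by
  have hL : (0:ℝ) < lam * n := by positivity
  set t := dotp x w with ht
  set X := sqnorm x with hX
  have hXnn : 0 ≤ X := Finset.sum_nonneg fun j _ => sq_nonneg _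
  -- lower bound on lstar: lstar v ≥ -l 0
  have hlb : ∀ v : ℝ, -(lstar v) ≤ l 0 := by
    intro v
    have := (hconj v).1 ⟨0, rfl⟩
    simp only [mul_zero, zero_sub] at this
    linarith
  -- Fenchel equality at the subgradient
  have hfe : lstar (-u) = -u * t - l t := by
    have h1 : -u * t - l t ≤ lstar (-u) := (hconj (-u)).1 ⟨t, rfl⟩
    have h2 : lstar (-u) ≤ -u * t - l t := by
      apply (hconj (-u)).2
      rintro _ ⟨z, rfl⟩
      have hz := hu z
      show -u * z - l z ≤ -u * t - l t
      linarith
    linarith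
  -- squared norm expansion
  have hsq : ∀ c : ℝ, sqnorm (w + c • x) = sqnorm w + 2 * c * t + c ^ 2 * X := by
    intro c
    simp only [sqnorm, dotp, hX, ht, Pi.add_apply, Pi.smul_apply, smul_eq_mul]
    rw [Finset.mul_sum, Finset.mul_sum, ← Finset.sum_add_distrib, ← Finset.sum_add_distrib]
    exact Finset.sum_congr rfl fun j _ => by ring
  set Δ := s * (u - a) with hΔ
  -- strong convexity bound
  have hsc : lstar (-(a + Δ)) ≤ (1 - s) * lstar (-a) + s * lstar (-u)
      - γ / 2 * s * (1 - s) * (u - a) ^ 2 := by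
    have h := hstrong.2 (Set.mem_univ (-a)) (Set.mem_univ (-u))
      (by linarith : (0:ℝ) ≤ 1 - s) hs0 (by ring)
    simp only [smul_eq_mul] at h
    have he : (1 - s) * (-a) + s * (-u) = -(a + Δ) := by rw [hΔ]; ring
    rw [he] at h
    have hq : γ / 2 * ((1 - s) * (-a) ^ 2) + γ / 2 * (s * (-u) ^ 2)
        - γ / 2 * ((-(a + Δ)) ^ 2) = γ / 2 * s * (1 - s) * (u - a) ^ 2 := by
      rw [hΔ]; ring
    nlinarith [h, hq]
  -- bounded above
  have hbdd : BddAbove (Set.range fun Δ : ℝ => -(lstar (-(a + Δ)))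
      - lam * n / 2 * sqnorm (w + (Δ / (lam * n)) • x)) := by
    refine ⟨l 0, ?_⟩
    rintro _ ⟨D, rfl⟩
    have h1 := hlb (-(a + D))
    have h2 : 0 ≤ sqnorm (w + (D / (lam * n)) • x) :=
      Finset.sum_nonneg fun j _ => sq_nonneg _
    nlinarith
  have hle : (fun Δ : ℝ => -(lstar (-(a + Δ)))
      - lam * n / 2 * sqnorm (w + (Δ / (lam * n)) • x)) Δ
      ≤ ⨆ Δ : ℝ, (-(lstar (-(a + Δ))) - lam * n / 2 * sqnorm (w + (Δ / (lam * n)) • x)) :=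
    le_ciSup hbdd Δ
  simp only at hle
  rw [hsq (Δ / (lam * n))] at hle
  -- the exact algebraic identity
  have hid : s * (l t + lstar (-a) + a * t
        + 1 / 2 * (γ * (1 - s) - s / (lam * n) * X) * (u - a) ^ 2)
      + (-(lstar (-a)) - lam * n / 2 * sqnorm w)
      = -((1 - s) * lstar (-a) + s * lstar (-u) - γ / 2 * s * (1 - s) * (u - a) ^ 2)
        - lam * n / 2 * (sqnorm w + 2 * (Δ / (lam * n)) * t + (Δ / (lam * n)) ^ 2 * X) := by
    rw [hfe, hΔ]
    field_simp
    ring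
  linarith [hid, hsc, hle]
end
end

section
/- For all w ∈ ℝ^d and α ∈ ℝ^n, the primal objective dominates the dual objective with a quadratic gap: P(w) − D(α) ≥ (λ/2)·‖w − Aα‖². In particular, the duality gap at the primal point w(α) := Aα is nonnegative: P(Aα) ≥ D(α). -/
open Finset MeasureTheory

noncomputable section

variable {n d K : ℕ}

/-- weak duality with quadratic gap. -/
theorem weak_duality_quadratic_gap
    (n d : ℕ) (hn : 0 < n) (hd : 0 < d)
    (lam : ℝ) (hlam : 0 < lam)
    (x : Fin n → Fin d → ℝ)
    (l lstar : Fin n → ℝ → ℝ)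
    (hconj : ∀ i, IsFenchelConj (l i) (lstar i))
    (w : Fin d → ℝ) (α : Fin n → ℝ) :
    lam / 2 * sqnorm (w - matA lam x α)
      ≤ primalObj lam x l w - dualObj lam x lstar α ∧
    dualObj lam x lstar α ≤ primalObj lam x l (matA lam x α) := by
  have hn' : (n : ℝ) ≠ 0 := Nat.cast_ne_zero.mpr hn.ne'
  have hlam' : lam ≠ 0 := hlam.ne'
  have main : ∀ u : Fin d → ℝ,
      lam / 2 * sqnorm (u - matA lam x α)
        ≤ primalObj lam x l u - dualObj lam x lstar α := by
    intro u
    set v := matA lam x α with hv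
    have hvj : ∀ j, v j = ∑ i, (α i / (lam * n)) * x i j := by
      intro j
      simp [hv, matA, Finset.sum_apply]
    have hA : sqnorm u + sqnorm v - sqnorm (u - v)
        = 2 * ∑ i, (α i / (lam * n)) * dotp u (x i) := by
      have h1 : sqnorm u + sqnorm v - sqnorm (u - v) = 2 * ∑ j, u j * v j := by
        simp only [sqnorm, Pi.sub_apply, ← Finset.sum_add_distrib,
          ← Finset.sum_sub_distrib, Finset.mul_sum]
        exact Finset.sum_congr rfl fun j _ => by ring
      rw [h1]
      congr 1
      calc ∑ j, u j * v j = ∑ j, ∑ i, u j * ((α i / (lam * n)) * x i j) := by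
                simp only [hvj, Finset.mul_sum]
        _ = ∑ i, ∑ j, u j * ((α i / (lam * n)) * x i j) := Finset.sum_comm
        _ = ∑ i, (α i / (lam * n)) * dotp u (x i) := by
                refine Finset.sum_congr rfl fun i _ => ?_
                rw [dotp, Finset.mul_sum]
                exact Finset.sum_congr rfl fun j _ => by ring
    have h2 : lam / 2 * (sqnorm u + sqnorm v - sqnorm (u - v))
        = (1 / (n : ℝ)) * ∑ i, α i * dotp u (x i) := by
      rw [hA, Finset.mul_sum, Finset.mul_sum, Finset.mul_sum]
      refine Finset.sum_congr rfl fun i _ => ?_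
      field_simp
    have hterm : ∀ i, 0 ≤ l i (dotp u (x i)) + lstar i (-(α i)) + α i * dotp u (x i) := by
      intro i
      have := (hconj i (-(α i))).1 ⟨dotp u (x i), rfl⟩
      simp only at this
      nlinarith
    have hsum : 0 ≤ (1 / (n : ℝ)) *
        ∑ i, (l i (dotp u (x i)) + lstar i (-(α i)) + α i * dotp u (x i)) := by
      apply mul_nonneg (by positivity)
      exact Finset.sum_nonneg fun i _ => hterm i
    have hexp : primalObj lam x l u - dualObj lam x lstar α
        - lam / 2 * sqnorm (u - v)
        = (1 / (n : ℝ)) *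
            ∑ i, (l i (dotp u (x i)) + lstar i (-(α i)) + α i * dotp u (x i)) := by
      simp only [primalObj, dualObj, ← hv, Finset.sum_add_distrib, mul_add]
      linarith [h2]
    linarith [hsum, hexp]
  refine ⟨main w, ?_⟩
  have := main (matA lam x α)
  have hz : sqnorm (matA lam x α - matA lam x α) = 0 := by
    simp [sqnorm]
  rw [hz, mul_zero] at this
  linarith
end
end
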